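/- For 1 ≤ j ≤ t−1 and n ≥ t, the identity Σ_{τ=1}^{n−t+1} binom(n+τ−1, t−j−1)·binom(n−t+j−τ, j−1) = Σ_{τ=1}^{n−t+1} binom(n, t−j−τ)·binom(n−t+j, j+τ−1) holds. -/

import Mathlib

open Finset

/-- Pascal-telescoping step. -/
lemma nu_tele (a b n q : ℕ) :
    ∑ s ∈ Finset.Icc (b+1) (a+b+1), (q+1).choose s * n.choose (a+b+1-s)
      = (∑ s ∈ Finset.Icc (b+1) (a+b+1), q.choose s * (n+1).choose (a+b+1-s))
        + n.choose a * q.choose b := by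
  have hr : ∀ g : ℕ → ℕ, ∑ s ∈ Finset.Icc (b+1) (a+b+1), g s
      = ∑ i ∈ Finset.range (a+1), g (b+1+i) := by
    intro g
    rw [← Finset.Ico_add_one_right_eq_Icc, Finset.sum_Ico_eq_sum_range]
    apply Finset.sum_congr
    · congr 1; omega
    · intro i _; rfl
  rw [hr, hr]
  have harg : ∀ i, a+b+1-(b+1+i) = a - i := fun i => by omega
  simp only [harg]
  -- F i = (q+1).choose (b+1+i) * n.choose (a-i)
  -- G i = q.choose (b+1+i) * (n+1).choose (a-i)
  -- g i = q.choose (b+i) * n.choose (a-i)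
  have key : ∀ i ∈ Finset.range a,
      (q+1).choose (b+1+i) * n.choose (a-i) + q.choose (b+(i+1)) * n.choose (a-(i+1))
        = q.choose (b+1+i) * (n+1).choose (a-i) + q.choose (b+i) * n.choose (a-i) := by
    intro i hi
    have hi' : i < a := Finset.mem_range.mp hi
    have e1 : a - i = (a - (i+1)) + 1 := by omega
    have e3 : b+1+i = (b+i)+1 := by omega
    have e4 : b+(i+1) = (b+i)+1 := by omega
    rw [e1, e3, e4, Nat.choose_succ_succ (q) (b+i), Nat.choose_succ_succ n (a-(i+1))]
    ring
  have H1 : (∑ i ∈ Finset.range a, (q+1).choose (b+1+i) * n.choose (a-i))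
        + ∑ i ∈ Finset.range a, q.choose (b+(i+1)) * n.choose (a-(i+1))
      = (∑ i ∈ Finset.range a, q.choose (b+1+i) * (n+1).choose (a-i))
        + ∑ i ∈ Finset.range a, q.choose (b+i) * n.choose (a-i) := by
    rw [← Finset.sum_add_distrib, ← Finset.sum_add_distrib]
    exact Finset.sum_congr rfl key
  -- telescoping of g
  have H2 : (∑ i ∈ Finset.range a, q.choose (b+(i+1)) * n.choose (a-(i+1)))
        + q.choose (b+0) * n.choose (a-0)
      = (∑ i ∈ Finset.range a, q.choose (b+i) * n.choose (a-i))
        + q.choose (b+a) * n.choose (a-a) := by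
    rw [← Finset.sum_range_succ' (fun i => q.choose (b+i) * n.choose (a-i)) a,
        ← Finset.sum_range_succ (fun i => q.choose (b+i) * n.choose (a-i)) a]
  rw [Finset.sum_range_succ, Finset.sum_range_succ]
  simp only [Nat.sub_self, Nat.choose_zero_right, mul_one, Nat.add_zero, Nat.sub_zero] at H2 ⊢
  have eFa : (q+1).choose (b+1+a)
      = q.choose (b+a) + q.choose (b+1+a) := by
    have : b+1+a = (b+a)+1 := by omega
    rw [this, Nat.choose_succ_succ]
  have e0 : q.choose b * n.choose a = n.choose a * q.choose b := Nat.mul_comm _ _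
  omega

/-- Main partial-Vandermonde lemma, by downward induction on `n`. -/
lemma nu_key (a b P : ℕ) : ∀ d n, n + d = P + 1 →
    ∑ k ∈ Finset.Icc n P, k.choose a * (P-k).choose b
      = ∑ s ∈ Finset.Icc (b+1) (a+b+1), (P+1-n).choose s * n.choose (a+b+1-s) := by
  intro d
  induction d with
  | zero =>
      intro n h
      have hn : n = P + 1 := by omega
      subst hn
      rw [Finset.Icc_eq_empty (by omega), Finset.sum_empty,
        show P+1-(P+1) = 0 from by omega]
      symm; apply Finset.sum_eq_zero; intro s hs
      have hs1 : b+1 ≤ s := (Finset.mem_Icc.mp hs).1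
      rw [Nat.choose_eq_zero_of_lt (by omega), zero_mul]
  | succ d ih =>
      intro n h
      have hn : n ≤ P := by omega
      have ihn := ih (n+1) (by omega)
      rw [← Finset.Ico_add_one_right_eq_Icc, Finset.sum_Ico_eq_sum_range] at ihn
      rw [← Finset.Ico_add_one_right_eq_Icc, Finset.sum_Ico_eq_sum_range]
      rw [show (P+1) - n = d+1 from by omega]
      rw [show (P+1) - (n+1) = d from by omega] at ihn
      rw [Finset.sum_range_succ']
      have hc : ∀ i ∈ Finset.range d,
          (n+(i+1)).choose a * (P-(n+(i+1))).choose b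
            = (n+1+i).choose a * (P-(n+1+i)).choose b := by
        intro i _
        congr 2 <;> omega
      rw [Finset.sum_congr rfl hc, ihn]
      rw [show n+0 = n from by omega, show P - n = d from by omega]
      exact (nu_tele a b n d).symm

lemma nu_aux (a b m : ℕ) :
    ∑ i ∈ Finset.range (m+1), (a+b+m+2+i).choose a * (m+b-i).choose b
      = ∑ i ∈ Finset.range (m+1),
          (if i ≤ a then (a+b+m+2).choose (a-i) else 0) * (m+b+1).choose (b+1+i) := by
  set n := a+b+m+2 with hn
  set P := n+m+b with hP
  -- extend LHS to range (m+b+1)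
  have L1 : ∑ i ∈ Finset.range (m+1), (n+i).choose a * (m+b-i).choose b
      = ∑ i ∈ Finset.range (m+b+1), (n+i).choose a * (m+b-i).choose b := by
    apply Finset.sum_subset (Finset.range_subset_range.mpr (by omega))
    intro i hi1 hi2
    simp only [Finset.mem_range] at hi1 hi2
    rw [Nat.choose_eq_zero_of_lt (show m+b-i < b from by omega), mul_zero]
  have L2 : ∑ k ∈ Finset.Icc n P, k.choose a * (P-k).choose b
      = ∑ i ∈ Finset.range (m+b+1), (n+i).choose a * (m+b-i).choose b := by
    rw [← Finset.Ico_add_one_right_eq_Icc, Finset.sum_Ico_eq_sum_range,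
      show (P+1) - n = m+b+1 from by omega]
    apply Finset.sum_congr rfl
    intro i _
    congr 2
    omega
  have K := nu_key a b P (m+b+1) n (by omega)
  rw [show P+1-n = m+b+1 from by omega] at K
  have R1 : ∑ s ∈ Finset.Icc (b+1) (a+b+1), (m+b+1).choose s * n.choose (a+b+1-s)
      = ∑ i ∈ Finset.range (a+1), (m+b+1).choose (b+1+i) * n.choose (a-i) := by
    rw [← Finset.Ico_add_one_right_eq_Icc, Finset.sum_Ico_eq_sum_range,
      show (a+b+1+1) - (b+1) = a+1 from by omega]
    apply Finset.sum_congr rfl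
    intro i _
    congr 2
    omega
  have R2 : ∑ i ∈ Finset.range (a+1), (m+b+1).choose (b+1+i) * n.choose (a-i)
      = ∑ i ∈ Finset.range (a+1), (if i ≤ a then n.choose (a-i) else 0) * (m+b+1).choose (b+1+i) := by
    apply Finset.sum_congr rfl
    intro i hi
    rw [if_pos (by simp only [Finset.mem_range] at hi; omega), mul_comm]
  -- both if-sums equal sum over range (max (m+1) (a+1))
  have E1 : ∑ i ∈ Finset.range (a+1), (if i ≤ a then n.choose (a-i) else 0) * (m+b+1).choose (b+1+i)
      = ∑ i ∈ Finset.range (max (m+1) (a+1)),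
          (if i ≤ a then n.choose (a-i) else 0) * (m+b+1).choose (b+1+i) := by
    apply Finset.sum_subset (Finset.range_subset_range.mpr (by omega))
    intro i hi1 hi2
    simp only [Finset.mem_range] at hi1 hi2
    rw [if_neg (by omega), zero_mul]
  have E2 : ∑ i ∈ Finset.range (m+1), (if i ≤ a then n.choose (a-i) else 0) * (m+b+1).choose (b+1+i)
      = ∑ i ∈ Finset.range (max (m+1) (a+1)),
          (if i ≤ a then n.choose (a-i) else 0) * (m+b+1).choose (b+1+i) := by
    apply Finset.sum_subset (Finset.range_subset_range.mpr (by omega))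
    intro i hi1 hi2
    simp only [Finset.mem_range] at hi1 hi2
    rw [Nat.choose_eq_zero_of_lt (show m+b+1 < b+1+i from by omega), mul_zero]
  rw [L1, ← L2, K, R1, R2, E1, ← E2]

/-- The combinatorial identity between the second and third expressions for `ν_ℓ` in
Lemma 3.3(b): for `1 ≤ j ≤ t − 1` and `t ≤ n`,
`∑_{τ=1}^{n−t+1} C(n+τ−1, t−j−1)·C(n−t+j−τ, j−1)
  = ∑_{τ=1}^{n−t+1} C(n, t−j−τ)·C(n−t+j, j+τ−1)`,
with the convention that `C(α, β) = 0` when `β < 0` or `β > α`. -/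
theorem nu_second_eq_third (n t j : ℕ) (htn : t ≤ n) (hj1 : 1 ≤ j) (hj2 : j ≤ t - 1) :
    ∑ τ ∈ Finset.Icc 1 (n - t + 1),
        (n + τ - 1).choose (t - j - 1) * (n - t + j - τ).choose (j - 1)
      = ∑ τ ∈ Finset.Icc 1 (n - t + 1),
          (if τ ≤ t - j then n.choose (t - j - τ) else 0) * (n - t + j).choose (j + τ - 1) := by
  obtain ⟨b, rfl⟩ : ∃ b, j = b+1 := ⟨j-1, by omega⟩
  obtain ⟨a, rfl⟩ : ∃ a, t = a+b+2 := ⟨t-b-2, by omega⟩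
  obtain ⟨m, rfl⟩ : ∃ m, n = a+b+m+2 := ⟨n-(a+b+2), by omega⟩
  rw [show a+b+m+2 - (a+b+2) + 1 = m+1 from by omega]
  rw [← Finset.Ico_add_one_right_eq_Icc, Finset.sum_Ico_eq_sum_range,
    show (m+1+1) - 1 = m+1 from by omega]
  rw [show a+b+m+2 - (a+b+2) + (b+1) = m+b+1 from by omega]
  have hL : ∀ i ∈ Finset.range (m+1),
      (a+b+m+2 + (1+i) - 1).choose (a+b+2 - (b+1) - 1) * (m+b+1 - (1+i)).choose (b+1-1)
        = (a+b+m+2+i).choose a * (m+b-i).choose b := by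
    intro i hi
    simp only [Finset.mem_range] at hi
    congr 2 <;> omega
  rw [Finset.sum_congr rfl hL, nu_aux a b m]
  rw [Finset.sum_Ico_eq_sum_range, show (m+1+1) - 1 = m+1 from by omega]
  apply Finset.sum_congr rfl
  intro i hi
  simp only [Finset.mem_range] at hi
  rw [show a+b+2 - (b+1) = a+1 from by omega]
  congr 1
  · by_cases h : i ≤ a
    · rw [if_pos (show 1+i ≤ a+1 from by omega), if_pos h]
      congr 1
      omega
    · rw [if_neg (show ¬(1+i ≤ a+1) from by omega), if_neg h]
  · congr 1
    omega
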